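/- Let f : 2^V → ℝ≥0 be a nonnegative submodular function on a finite set V, let S* ⊆ V, and let T be a random subset of V \ S* in which each element appears with probability at most p (marginally, with arbitrary correlations). Then E[f(S* ∪ T)] ≥ (1 − p) · f(S*). -/

import Mathlib

open scoped Classical

/-- Greedy "price" sum over a list, restricted to a set `T`. -/
noncomputable def sumY {G : Type*} (g : Set G → ℝ) (T : Set G) : Set G → List G → ℝ
  | _, [] => 0
  | P, e :: l => (if e ∈ T then g (insert e P) - g P else 0) + sumY g T (insert e P) l

/-- Weighted greedy sum. -/
noncomputable def Yt {G : Type*} (g : Set G → ℝ) (x : G → ℝ) : Set G → List G → ℝ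
  | _, [] => 0
  | P, e :: l => x e * (g (insert e P) - g P) + Yt g x (insert e P) l

theorem sumY_le {G : Type*} (g : Set G → ℝ)
    (gsub : ∀ X Y : Set G, g (X ∩ Y) + g (X ∪ Y) ≤ g X + g Y)
    (T : Set G) : ∀ (l : List G) (P : Set G),
    sumY g T P l ≤ g ((T ∩ {a | a ∈ l}) ∪ P) - g P := by
  intro l
  induction l with
  | nil =>
    intro P
    simp [sumY]
  | cons e l ih =>
    intro P
    by_cases he : e ∈ T
    · have h1 := ih (insert e P)
      have hkey : (T ∩ {a | a ∈ e :: l}) ∪ P = (T ∩ {a | a ∈ l}) ∪ insert e P := by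
        ext a
        simp only [List.mem_cons, Set.mem_union, Set.mem_inter_iff, Set.mem_setOf_eq,
          Set.mem_insert_iff]
        by_cases ha : a = e
        · subst ha; tauto
        · tauto
      rw [sumY, if_pos he, hkey]
      linarith
    · have h1 := ih (insert e P)
      have hkey : (T ∩ {a | a ∈ e :: l}) ∪ P = (T ∩ {a | a ∈ l}) ∪ P := by
        ext a
        simp only [List.mem_cons, Set.mem_union, Set.mem_inter_iff, Set.mem_setOf_eq]
        by_cases ha : a = e
        · subst ha; tauto
        · tauto
      rw [sumY, if_neg he, hkey]
      have hXY := gsub ((T ∩ {a | a ∈ l}) ∪ P) (insert e P)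
      have hint : ((T ∩ {a | a ∈ l}) ∪ P) ∩ (insert e P) = P := by
        ext a
        simp only [Set.mem_inter_iff, Set.mem_union, Set.mem_insert_iff, Set.mem_setOf_eq]
        by_cases ha : a = e
        · subst ha; tauto
        · tauto
      have hun : ((T ∩ {a | a ∈ l}) ∪ P) ∪ (insert e P) = (T ∩ {a | a ∈ l}) ∪ insert e P := by
        ext a
        simp only [Set.mem_union, Set.mem_insert_iff, Set.mem_inter_iff, Set.mem_setOf_eq]
        tauto
      rw [hint, hun] at hXY
      linarith

theorem Yt_ge {G : Type*} (g : Set G → ℝ) (x : G → ℝ)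
    (hg0 : ∀ A : Set G, 0 ≤ g A) :
    ∀ (l : List G) (P : Set G) (b : ℝ), 0 ≤ b →
    (∀ e ∈ l, 0 ≤ x e ∧ x e ≤ b) →
    l.Pairwise (fun a c => x c ≤ x a) →
    -(b * g P) ≤ Yt g x P l := by
  intro l
  induction l with
  | nil =>
    intro P b hb _ _
    have := hg0 P
    simp only [Yt]
    nlinarith
  | cons e l ih =>
    intro P b hb hx hs
    rw [Yt]
    have hxe := hx e List.mem_cons_self
    have hs' := List.pairwise_cons.mp hs
    have ih' := ih (insert e P) (x e) hxe.1
      (fun c hc => ⟨(hx c (List.mem_cons_of_mem e hc)).1, hs'.1 c hc⟩) hs'.2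
    have h1 : -(x e * g P) ≤ x e * (g (insert e P) - g P) + Yt g x (insert e P) l := by
      have := hg0 (insert e P)
      nlinarith
    have h2 : -(b * g P) ≤ -(x e * g P) := by
      have := hg0 P
      nlinarith [hxe.2]
    linarith

theorem sum_sumY {G Ω : Type*} [Fintype Ω] (g : Set G → ℝ) (μ : Ω → ℝ)
    (T' : Ω → Set G) :
    ∀ (l : List G) (P : Set G),
    ∑ ω : Ω, μ ω * sumY g (T' ω) P l
      = Yt g (fun e => ∑ ω : Ω, if e ∈ T' ω then μ ω else 0) P l := by
  intro l
  induction l with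
  | nil => intro P; simp [sumY, Yt]
  | cons e l ih =>
    intro P
    rw [Yt, ← ih (insert e P)]
    have hterm : ∀ ω : Ω, μ ω * sumY g (T' ω) P (e :: l)
        = (if e ∈ T' ω then μ ω else 0) * (g (insert e P) - g P)
          + μ ω * sumY g (T' ω) (insert e P) l := by
      intro ω
      rw [sumY]
      by_cases h : e ∈ T' ω <;> simp [h] <;> ring
    rw [Finset.sum_congr rfl (fun ω _ => hterm ω), Finset.sum_add_distrib, Finset.sum_mul]

theorem Yt_congr {G : Type*} (g : Set G → ℝ) {x x' : G → ℝ}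
    (h : ∀ e, x e = x' e) : ∀ (l : List G) (P : Set G), Yt g x P l = Yt g x' P l := by
  intro l
  induction l with
  | nil => intro P; simp [Yt]
  | cons e l ih => intro P; rw [Yt, Yt, h e, ih (insert e P)]

theorem stmt_10 {V : Type*} (f : Set V → ℝ)
    (hnonneg : ∀ A : Set V, 0 ≤ f A)
    (hsub : ∀ A B : Set V, f (A ∩ B) + f (A ∪ B) ≤ f A + f B)
    (Sstar : Set V) (p : ℝ) (hp : 0 ≤ p)
    (Ω : Type*) [Fintype Ω] (μ : Ω → ℝ)
    (hμ0 : ∀ ω, 0 ≤ μ ω) (hμ1 : ∑ ω : Ω, μ ω = 1)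
    (T : Ω → Set V)
    (hT : ∀ ω, T ω ⊆ Set.univ \ Sstar)
    (hmarg : ∀ i : V, i ∉ Sstar →
      ∑ ω : Ω, (if i ∈ T ω then μ ω else 0) ≤ p) :
    (1 - p) * f Sstar ≤ ∑ ω : Ω, μ ω * f (Sstar ∪ T ω) := by
  classical
  set pat : V → Set Ω := fun i => {ω | i ∈ T ω} with hpat
  set NE : Set (Set Ω) := {π | ∃ i, i ∉ Sstar ∧ pat i = π} with hNE
  set U : Set (Set Ω) → Set V := fun X => Sstar ∪ {i | i ∉ Sstar ∧ pat i ∈ X} with hU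
  set g : Set (Set Ω) → ℝ := fun X => f (U X) with hg
  have hUint : ∀ X Y, U (X ∩ Y) = U X ∩ U Y := by
    intro X Y; ext i
    simp only [hU, Set.mem_union, Set.mem_setOf_eq, Set.mem_inter_iff]
    tauto
  have hUun : ∀ X Y, U (X ∪ Y) = U X ∪ U Y := by
    intro X Y; ext i
    simp only [hU, Set.mem_union, Set.mem_setOf_eq]
    tauto
  have gsub : ∀ X Y, g (X ∩ Y) + g (X ∪ Y) ≤ g X + g Y := by
    intro X Y
    simp only [hg, hUint, hUun]
    exact hsub (U X) (U Y)
  have hg0 : ∀ A, 0 ≤ g A := fun A => hnonneg _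
  set T' : Ω → Set (Set Ω) := fun ω => {π | ω ∈ π ∧ π ∈ NE} with hT'
  have hUT' : ∀ ω, U (T' ω) = Sstar ∪ T ω := by
    intro ω; ext i
    simp only [hU, hT', Set.mem_union, Set.mem_setOf_eq, hNE, hpat]
    constructor
    · rintro (h | ⟨h1, h2, _⟩)
      · exact Or.inl h
      · exact Or.inr h2
    · rintro (h | h)
      · exact Or.inl h
      · have hi : i ∉ Sstar := ((hT ω) h).2
        exact Or.inr ⟨hi, h, ⟨i, hi, rfl⟩⟩
  set x : Set Ω → ℝ := fun e => ∑ ω : Ω, if e ∈ T' ω then μ ω else 0 with hx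
  have hx0 : ∀ e, 0 ≤ x e := by
    intro e
    apply Finset.sum_nonneg
    intro ω _
    by_cases h : e ∈ T' ω
    · rw [if_pos h]; exact hμ0 ω
    · rw [if_neg h]
  have hxp : ∀ e ∈ NE, x e ≤ p := by
    rintro e ⟨i, hi, hie⟩
    have hxe : x e = ∑ ω : Ω, if i ∈ T ω then μ ω else 0 := by
      apply Finset.sum_congr rfl
      intro ω _
      congr 1
      simp only [hT', Set.mem_setOf_eq, eq_iff_iff]
      constructor
      · rintro ⟨h1, _⟩; rw [← hie] at h1; exact h1
      · intro h; exact ⟨by rw [← hie]; exact h, ⟨i, hi, hie⟩⟩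
    rw [hxe]
    exact hmarg i hi
  have hNEfin : NE.Finite := Set.toFinite NE
  set l0 : List (Set Ω) := hNEfin.toFinset.toList with hl0
  set le' : Set Ω → Set Ω → Bool := fun a b => decide (x b ≤ x a) with hle
  set l : List (Set Ω) := l0.mergeSort le' with hl
  have hmem : ∀ a, a ∈ l ↔ a ∈ NE := by
    intro a
    rw [hl, (List.mergeSort_perm l0 le').mem_iff, hl0, Finset.mem_toList,
      Set.Finite.mem_toFinset]
  have hsorted : l.Pairwise (fun a c => x c ≤ x a) := by
    have htrans : ∀ a b c, le' a b = true → le' b c = true → le' a c = true := by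
      intro a b c h1 h2
      simp only [hle, decide_eq_true_eq] at *
      linarith
    have htotal : ∀ a b, (le' a b || le' b a) = true := by
      intro a b
      simp only [hle, Bool.or_eq_true, decide_eq_true_eq]
      exact le_total (x b) (x a)
    have hres := List.pairwise_mergeSort htrans htotal l0
    rw [← hl] at hres
    exact hres.imp (by intro a b h; simpa [hle] using h)
  have hcover : ∀ ω, T' ω ∩ {a | a ∈ l} = T' ω := by
    intro ω
    apply Set.inter_eq_self_of_subset_left
    intro a ha
    rw [Set.mem_setOf_eq, hmem]
    exact ha.2
  have step1' : ∀ ω, μ ω * (g ∅ + sumY g (T' ω) ∅ l) ≤ μ ω * f (Sstar ∪ T ω) := by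
    intro ω
    have h := sumY_le g gsub (T' ω) l ∅
    rw [hcover ω, Set.union_empty] at h
    have h2 : g ∅ + sumY g (T' ω) ∅ l ≤ f (Sstar ∪ T ω) := by
      have : g (T' ω) = f (Sstar ∪ T ω) := by
        show f (U (T' ω)) = f (Sstar ∪ T ω)
        rw [hUT' ω]
      linarith
    have := hμ0 ω
    nlinarith
  have hsum : ∑ ω : Ω, μ ω * (g ∅ + sumY g (T' ω) ∅ l) ≤ ∑ ω : Ω, μ ω * f (Sstar ∪ T ω) :=
    Finset.sum_le_sum (fun ω _ => step1' ω)
  have hexp : ∑ ω : Ω, μ ω * (g ∅ + sumY g (T' ω) ∅ l)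
      = g ∅ + Yt g x ∅ l := by
    have hswap := sum_sumY g μ T' l ∅
    calc ∑ ω : Ω, μ ω * (g ∅ + sumY g (T' ω) ∅ l)
        = ∑ ω : Ω, (μ ω * g ∅ + μ ω * sumY g (T' ω) ∅ l) := by
          apply Finset.sum_congr rfl; intro ω _; ring
      _ = (∑ ω : Ω, μ ω) * g ∅ + ∑ ω : Ω, μ ω * sumY g (T' ω) ∅ l := by
          rw [Finset.sum_add_distrib, Finset.sum_mul]
      _ = g ∅ + Yt g x ∅ l := by 
          rw [hμ1, one_mul, hswap]
          congr 1
          apply Yt_congr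
          intro e
          simp only [hx]
          exact Finset.sum_congr rfl (fun ω _ => by congr)
  have habel : -(p * g ∅) ≤ Yt g x ∅ l := by
    apply Yt_ge g x hg0 l ∅ p hp
    · intro e he
      exact ⟨hx0 e, hxp e ((hmem e).mp he)⟩
    · exact hsorted
  have hgempty : g ∅ = f Sstar := by
    show f (U ∅) = f Sstar
    have hU0 : U ∅ = Sstar := by
      rw [hU]; simp
    rw [hU0]
  rw [hgempty] at hsum hexp habel
  linarith
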